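/- Let G = (V,E) be a finite simple graph with |V| = N ≥ 1, and let α ∈ [0,1] be a real number with |E| ≥ α · C(N,2), where C(N,2) denotes the binomial coefficient (N choose 2). Then the number of 6-tuples (u_1,…,u_6) ∈ V^6 with u_1,…,u_6 pairwise distinct and with {u_a,u_b} ∈ E for every a ∈ {1,2} and every b ∈ {3,4,5,6} is at least (α^8 − 23/N) · N^6. -/

import Mathlib

open Finset

section Aux

variable {V : Type*} [Fintype V] [DecidableEq V] (G : SimpleGraph V) [DecidableRel G.Adj]

private def cdeg (p : V × V) : ℕ :=
  (Finset.univ.filter fun w => G.Adj p.1 w ∧ G.Adj p.2 w).card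

private lemma fiber_card (p : V × V) :
    ((Finset.univ.filter fun f : Fin 6 → V =>
      ∀ a b : Fin 6, (a : ℕ) < 2 → 2 ≤ (b : ℕ) → G.Adj (f a) (f b)).filter
      (fun f => (f 0, f 1) = p)).card = cdeg G p ^ 4 := by
  rw [cdeg, ← Fintype.card_piFinset_const (Finset.univ.filter fun w => G.Adj p.1 w ∧ G.Adj p.2 w) 4]
  refine Finset.card_bij'
    (fun f _ => fun k : Fin 4 => f ⟨(k : ℕ) + 2, by have := k.isLt; omega⟩)
    (fun g _ => fun a : Fin 6 =>
      if ha : (a : ℕ) < 2 then (if (a : ℕ) = 0 then p.1 else p.2)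
      else g ⟨(a : ℕ) - 2, by have := a.isLt; omega⟩) ?_ ?_ ?_ ?_
  · intro f hf
    simp only [mem_filter, mem_univ, true_and, Prod.ext_iff] at hf
    obtain ⟨hP, h0, h1⟩ := hf
    simp only [Fintype.mem_piFinset, mem_filter, mem_univ, true_and]
    intro k
    constructor
    · rw [← h0]; exact hP 0 _ (by norm_num) (by simp)
    · rw [← h1]; exact hP 1 _ (by norm_num) (by simp)
  · intro g hg
    simp only [Fintype.mem_piFinset, mem_filter, mem_univ, true_and] at hg
    simp only [mem_filter, mem_univ, true_and, Prod.ext_iff]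
    refine ⟨?_, by norm_num, by norm_num⟩
    intro a b ha hb
    have hb' : ¬ ((b : ℕ) < 2) := by omega
    rcases (show (a : ℕ) = 0 ∨ (a : ℕ) = 1 by omega) with h | h
    · simp only [dif_pos ha, dif_neg hb', h, if_pos rfl]
      exact (hg _).1
    · simp only [dif_pos ha, dif_neg hb', h]
      norm_num
      exact (hg _).2
  · intro f hf
    simp only [mem_filter, mem_univ, true_and, Prod.ext_iff] at hf
    obtain ⟨hP, h0, h1⟩ := hf
    funext a
    by_cases ha : (a : ℕ) < 2
    · rcases (show (a : ℕ) = 0 ∨ (a : ℕ) = 1 by omega) with h | h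
      · have ha0 : a = 0 := Fin.ext (show (a : ℕ) = ((0 : Fin 6) : ℕ) from h)
        subst ha0
        simp only [dif_pos ha]
        simpa using h0.symm
      · have ha1 : a = 1 := Fin.ext (show (a : ℕ) = ((1 : Fin 6) : ℕ) from h)
        subst ha1
        simp only [dif_pos ha]
        simpa using h1.symm
    · simp only [dif_neg ha]
      congr 1
      apply Fin.ext
      show (a : ℕ) - 2 + 2 = (a : ℕ)
      omega
  · intro g hg
    funext k
    have hk : ¬ ((k : ℕ) + 2 < 2) := by omega
    simp only [dif_neg hk]
    congr 1

private lemma hom_card_eq :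
    (Finset.univ.filter fun f : Fin 6 → V =>
      ∀ a b : Fin 6, (a : ℕ) < 2 → 2 ≤ (b : ℕ) → G.Adj (f a) (f b)).card
      = ∑ p : V × V, cdeg G p ^ 4 := by
  rw [Finset.card_eq_sum_card_fiberwise (f := fun f : Fin 6 → V => (f 0, f 1))
    (t := Finset.univ) (fun x _ => mem_univ _)]
  exact Finset.sum_congr rfl fun p _ => fiber_card G p

private lemma sum_cdeg_eq : ∑ p : V × V, cdeg G p = ∑ w : V, G.degree w ^ 2 := by
  have hdeg : ∀ w : V, ∑ u : V, (if G.Adj u w then 1 else 0) = G.degree w := by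
    intro w
    rw [SimpleGraph.degree, SimpleGraph.neighborFinset_eq_filter, Finset.card_filter]
    exact Finset.sum_congr rfl fun u _ => if_congr (G.adj_comm u w) rfl rfl
  have hc : ∀ p : V × V, cdeg G p
      = ∑ w : V, (if G.Adj p.1 w then 1 else 0) * (if G.Adj p.2 w then 1 else 0) := by
    intro p
    rw [cdeg, Finset.card_filter]
    refine Finset.sum_congr rfl fun w _ => ?_
    by_cases h1 : G.Adj p.1 w <;> by_cases h2 : G.Adj p.2 w <;> simp [h1, h2]
  simp only [hc]
  rw [Finset.sum_comm]
  refine Finset.sum_congr rfl fun w _ => ?_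
  rw [Fintype.sum_prod_type]
  show (∑ u : V, ∑ v : V, (if G.Adj u w then (1:ℕ) else 0) * (if G.Adj v w then 1 else 0))
      = G.degree w ^ 2
  rw [← Finset.sum_mul_sum, hdeg, sq]

private lemma pair_card_le (i j : Fin 6) (hij : i ≠ j) :
    (Finset.univ.filter fun f : Fin 6 → V => f i = f j).card ≤ Fintype.card V ^ 5 := by
  have h5 : Fintype.card ({k : Fin 6 // k ≠ j} → V) = Fintype.card V ^ 5 := by
    rw [Fintype.card_fun]
    congr 1
    have : Fintype.card {k : Fin 6 // k ≠ j} = 5 := by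
      simp [Fintype.card_subtype_compl]
    rw [this]
  calc (Finset.univ.filter fun f : Fin 6 → V => f i = f j).card
      ≤ (Finset.univ : Finset ({k : Fin 6 // k ≠ j} → V)).card := by
        apply Finset.card_le_card_of_injOn (fun f => fun k => f k.1)
          (fun f _ => mem_univ _)
        intro f hf g hg hfg
        simp only [coe_filter, Set.mem_setOf_eq, mem_univ, true_and] at hf hg
        funext a
        by_cases haj : a = j
        · subst haj
          rw [← hf, ← hg]
          exact congrFun hfg ⟨i, hij⟩
        · exact congrFun hfg ⟨a, haj⟩
    _ = Fintype.card V ^ 5 := by rw [Finset.card_univ, h5]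

private lemma noninj_card_le :
    (Finset.univ.filter fun f : Fin 6 → V => ¬ Function.Injective f).card
      ≤ 15 * Fintype.card V ^ 5 := by
  have hsub : (Finset.univ.filter fun f : Fin 6 → V => ¬ Function.Injective f) ⊆
      (Finset.univ.filter fun pr : Fin 6 × Fin 6 => pr.1 < pr.2).biUnion
        (fun pr => Finset.univ.filter fun f : Fin 6 → V => f pr.1 = f pr.2) := by
    intro f hf
    simp only [mem_filter, mem_univ, true_and] at hf
    rw [Function.not_injective_iff] at hf
    obtain ⟨a, b, hab, hne⟩ := hf
    rcases lt_or_gt_of_ne hne with h | h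
    · exact mem_biUnion.2 ⟨(a, b), by simp [h], by simp [hab]⟩
    · exact mem_biUnion.2 ⟨(b, a), by simp [h], by simp [hab.symm]⟩
  refine le_trans (Finset.card_le_card hsub) (le_trans Finset.card_biUnion_le ?_)
  have h15 : (Finset.univ.filter fun pr : Fin 6 × Fin 6 => pr.1 < pr.2).card = 15 := by decide
  calc ∑ pr ∈ Finset.univ.filter fun pr : Fin 6 × Fin 6 => pr.1 < pr.2,
        (Finset.univ.filter fun f : Fin 6 → V => f pr.1 = f pr.2).card
      ≤ ∑ _pr ∈ Finset.univ.filter fun pr : Fin 6 × Fin 6 => pr.1 < pr.2,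
          Fintype.card V ^ 5 := by
        refine Finset.sum_le_sum fun pr hpr => ?_
        simp only [mem_filter, mem_univ, true_and] at hpr
        exact pair_card_le pr.1 pr.2 (ne_of_lt hpr)
    _ = 15 * Fintype.card V ^ 5 := by rw [Finset.sum_const, h15, smul_eq_mul]

private lemma eight_pow (a b : ℝ) (hb : 0 ≤ b) (hba : b ≤ a) :
    a ^ 8 - 8 * a ^ 7 * b ≤ (a - b) ^ 8 := by
  set c : ℝ := a - b with hc
  have hc0 : 0 ≤ c := by simp [hc]; linarith
  have hca : c ≤ a := by simp [hc]; linarith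
  have ha0 : 0 ≤ a := le_trans hb hba
  have hfac : a ^ 8 - c ^ 8 = (a - c) * (a^7 + a^6*c + a^5*c^2 + a^4*c^3 + a^3*c^4
      + a^2*c^5 + a*c^6 + c^7) := by ring
  have hbig : a^7 + a^6*c + a^5*c^2 + a^4*c^3 + a^3*c^4 + a^2*c^5 + a*c^6 + c^7
      ≤ 8 * a^7 := by
    have h8 : (8:ℝ) * a^7 = a^7 + a^6*a + a^5*a^2 + a^4*a^3 + a^3*a^4 + a^2*a^5
        + a*a^6 + a^7 := by ring
    rw [h8]
    gcongr <;> first | exact hc0 | exact hca | exact ha0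
  have hab : a - c = b := by simp [hc]
  have h1 : (a - c) * (a^7 + a^6*c + a^5*c^2 + a^4*c^3 + a^3*c^4 + a^2*c^5 + a*c^6 + c^7)
      ≤ (a - c) * (8 * a^7) := mul_le_mul_of_nonneg_left hbig (by linarith)
  rw [← hfac, hab] at h1
  linarith

end Aux


set_option maxHeartbeats 1000000 in
/-- Let `G = (V,E)` be a finite simple graph with `|V| = N ≥ 1`, and let
`α ∈ [0,1]` with `|E| ≥ α·C(N,2)`.  Then the number of 6-tuples `(u₁,…,u₆) ∈ V⁶` with
`u₁,…,u₆` pairwise distinct and `{u_a,u_b} ∈ E` for every `a ∈ {1,2}` and `b ∈ {3,4,5,6}`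
is at least `(α⁸ − 23/N)·N⁶`. -/
theorem stmt2 {V : Type*} [Fintype V] [DecidableEq V]
    (G : SimpleGraph V) [DecidableRel G.Adj]
    (N : ℕ) (hN : Fintype.card V = N) (hN1 : 1 ≤ N)
    (α : ℝ) (hα0 : 0 ≤ α) (hα1 : α ≤ 1)
    (hE : α * (N.choose 2 : ℝ) ≤ (G.edgeFinset.card : ℝ)) :
    (α ^ 8 - 23 / (N : ℝ)) * (N : ℝ) ^ 6 ≤
      ((Finset.univ.filter fun u : Fin 6 → V =>
        Function.Injective u ∧
          ∀ a b : Fin 6, (a : ℕ) < 2 → 2 ≤ (b : ℕ) → G.Adj (u a) (u b)).card : ℝ) := by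
  classical
  have hN0 : (0:ℝ) < (N:ℝ) := by exact_mod_cast hN1
  by_cases htriv : α ^ 8 * N ≤ 23
  · refine le_trans ?_ (Nat.cast_nonneg _)
    apply mul_nonpos_of_nonpos_of_nonneg
    · rw [sub_nonpos, le_div_iff₀ hN0]
      exact htriv
    · positivity
  push_neg at htriv
  -- basic quantities
  set T := ((Finset.univ.filter fun u : Fin 6 → V =>
        Function.Injective u ∧
          ∀ a b : Fin 6, (a : ℕ) < 2 → 2 ≤ (b : ℕ) → G.Adj (u a) (u b)).card : ℝ) with hT
  have hT0 : (0:ℝ) ≤ T := Nat.cast_nonneg _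
  set S1 : ℝ := ∑ w : V, (G.degree w : ℝ) with hS1
  set S2 : ℝ := ∑ w : V, (G.degree w : ℝ)^2 with hS2
  -- degree sum
  have hdegsum : S1 = 2 * (G.edgeFinset.card : ℝ) := by
    rw [hS1]
    rw [← Nat.cast_sum]
    rw [G.sum_degrees_eq_twice_card_edges]
    push_cast
    ring
  -- choose cast
  have hch : ((N.choose 2 : ℕ) : ℝ) = (N:ℝ) * ((N:ℝ) - 1) / 2 := Nat.cast_choose_two ℝ N
  -- alpha bounds
  have hαN : (1:ℝ) ≤ α * N := by
    have h8 : α ^ 8 ≤ α := by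
      calc α ^ 8 ≤ α ^ 1 := pow_le_pow_of_le_one hα0 hα1 (by norm_num)
        _ = α := pow_one α
    nlinarith
  -- lower bound on S1
  set D : ℝ := α * (N:ℝ)^2 - N with hD
  have hD0 : 0 ≤ D := by rw [hD]; nlinarith
  have hDS1 : D ≤ S1 := by
    rw [hdegsum, hD]
    rw [hch] at hE
    nlinarith [mul_le_of_le_one_left (le_of_lt hN0) hα1]
  -- Jensen over V
  have hJ1 : S1 ^ 2 / (N:ℝ) ^ 1 ≤ S2 := by
    have := pow_sum_div_card_le_sum_pow (s := (Finset.univ : Finset V))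
      (f := fun w => (G.degree w : ℝ)) (fun i _ => Nat.cast_nonneg _) 1
    simpa [Finset.card_univ, hN, ← hS1, ← hS2] using this
  -- hom count
  have hhom : ((Finset.univ.filter fun f : Fin 6 → V =>
      ∀ a b : Fin 6, (a : ℕ) < 2 → 2 ≤ (b : ℕ) → G.Adj (f a) (f b)).card : ℝ)
      = ∑ p : V × V, (cdeg G p : ℝ)^4 := by
    rw [hom_card_eq G]
    push_cast
    rfl
  -- Jensen over V × V
  have hcard2 : ((Finset.univ : Finset (V × V)).card : ℝ) = (N:ℝ)^2 := by
    rw [Finset.card_univ, Fintype.card_prod, hN]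
    push_cast; ring
  have hJ2 : (∑ p : V × V, (cdeg G p : ℝ)) ^ 4 / ((N:ℝ)^2) ^ 3
      ≤ ∑ p : V × V, (cdeg G p : ℝ)^4 := by
    have := pow_sum_div_card_le_sum_pow (s := (Finset.univ : Finset (V × V)))
      (f := fun p => (cdeg G p : ℝ)) (fun i _ => Nat.cast_nonneg _) 3
    have hc : ((Finset.univ : Finset (V × V)).card : ℝ)^3 = ((N:ℝ)^2)^3 := by rw [hcard2]
    rw [← hc]
    exact_mod_cast this
  have hsc : (∑ p : V × V, (cdeg G p : ℝ)) = S2 := by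
    rw [← Nat.cast_sum, sum_cdeg_eq G, hS2]
    push_cast
    rfl
  -- chain of inequalities
  have hS20 : 0 ≤ S2 := by
    rw [hS2]
    exact Finset.sum_nonneg fun w _ => sq_nonneg _
  have hDS2 : D^2 / N ≤ S2 := by
    refine le_trans ?_ hJ1
    rw [pow_one]
    gcongr
  have hhomlb : D^8 / (N:ℝ)^10 ≤ ((Finset.univ.filter fun f : Fin 6 → V =>
      ∀ a b : Fin 6, (a : ℕ) < 2 → 2 ≤ (b : ℕ) → G.Adj (f a) (f b)).card : ℝ) := by
    rw [hhom]
    refine le_trans ?_ hJ2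
    rw [hsc]
    have h1 : (D^2/N)^4 ≤ S2^4 := pow_le_pow_left₀ (by positivity) hDS2 4
    calc D^8 / (N:ℝ)^10 = (D^2/N)^4 / ((N:ℝ)^2)^3 := by
          field_simp
      _ ≤ S2^4 / ((N:ℝ)^2)^3 := by gcongr
  -- split off non-injective maps
  have hsplitN : (Finset.univ.filter fun f : Fin 6 → V =>
      ∀ a b : Fin 6, (a : ℕ) < 2 → 2 ≤ (b : ℕ) → G.Adj (f a) (f b)).card
      ≤ (Finset.univ.filter fun u : Fin 6 → V =>
        Function.Injective u ∧
          ∀ a b : Fin 6, (a : ℕ) < 2 → 2 ≤ (b : ℕ) → G.Adj (u a) (u b)).card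
        + (Finset.univ.filter fun f : Fin 6 → V => ¬ Function.Injective f).card := by
    refine le_trans (Finset.card_le_card ?_) (Finset.card_union_le _ _)
    intro f hf
    simp only [Finset.mem_filter, Finset.mem_univ, true_and, Finset.mem_union] at *
    by_cases h : Function.Injective f
    · exact Or.inl ⟨h, hf⟩
    · exact Or.inr h
  have hninj : ((Finset.univ.filter fun f : Fin 6 → V => ¬ Function.Injective f).card : ℝ)
      ≤ 15 * (N:ℝ)^5 := by
    have := noninj_card_le (V := V)
    rw [hN] at this
    exact_mod_cast this
  have hsplit : ((Finset.univ.filter fun f : Fin 6 → V =>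
      ∀ a b : Fin 6, (a : ℕ) < 2 → 2 ≤ (b : ℕ) → G.Adj (f a) (f b)).card : ℝ)
      ≤ T + 15 * (N:ℝ)^5 := by
    rw [hT]
    have := hsplitN
    have h2 : ((Finset.univ.filter fun f : Fin 6 → V =>
      ∀ a b : Fin 6, (a : ℕ) < 2 → 2 ≤ (b : ℕ) → G.Adj (f a) (f b)).card : ℝ)
      ≤ ((Finset.univ.filter fun u : Fin 6 → V =>
        Function.Injective u ∧
          ∀ a b : Fin 6, (a : ℕ) < 2 → 2 ≤ (b : ℕ) → G.Adj (u a) (u b)).card : ℝ)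
        + ((Finset.univ.filter fun f : Fin 6 → V => ¬ Function.Injective f).card : ℝ) := by
      exact_mod_cast this
    linarith
  -- numeric endgame
  have hkey : α^8 * (N:ℝ)^16 - 8 * (N:ℝ)^15 ≤ D^8 := by
    have h8p := eight_pow (α * (N:ℝ)^2) (N:ℝ) (le_of_lt hN0) (by nlinarith)
    have hα7 : α^7 ≤ 1 := pow_le_one₀ hα0 hα1
    have : (α * (N:ℝ)^2)^8 - 8 * (α * (N:ℝ)^2)^7 * N = α^8 * (N:ℝ)^16 - 8 * α^7 * (N:ℝ)^15 := by
      ring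
    rw [this] at h8p
    have hexp : (α * (N:ℝ)^2 - N) = D := by rw [hD]
    rw [hexp] at h8p
    nlinarith [pow_pos hN0 15]
  have hdiv1 : (α^8 * (N:ℝ)^16 - 8 * (N:ℝ)^15) / (N:ℝ)^10
      = α^8 * (N:ℝ)^6 - 8 * (N:ℝ)^5 := by
    field_simp
  have hdiv2 : (α ^ 8 - 23 / (N : ℝ)) * (N : ℝ) ^ 6 = α^8 * (N:ℝ)^6 - 23 * (N:ℝ)^5 := by
    field_simp
  have hmono : (α^8 * (N:ℝ)^16 - 8 * (N:ℝ)^15) / (N:ℝ)^10 ≤ D^8 / (N:ℝ)^10 := by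
    gcongr
  rw [hdiv2]
  rw [hdiv1] at hmono
  linarith
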